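/- arXiv:1709.09463 — 2 statements merged into one kernel-verified Lean document; each statement's English description precedes it below -/
import Mathlib

section
/- Let C₁ and C₂ be vertex-disjoint graphs, each 2-regular, where C₂ is a finite cycle, and let e₁ = (a,b) ∈ E(C₁), e₂ = (c,d) ∈ E(C₂). Then the graph (C₁ ∪ C₂) − {e₁, e₂} + {(a,c), (b,d)} is connected, 2-regular, and has vertex set V(C₁) ∪ V(C₂). -/
/-- Every vertex in the support of `H` has exactly two neighbours. -/
def TwoRegularOn {V : Type*} (H : SimpleGraph V) : Prop :=
  ∀ v ∈ H.support, (H.neighborSet v).ncard = 2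

/-- Any two vertices in the support of `H` are joined by a path in `H`. -/
def ConnectedOn {V : Type*} (H : SimpleGraph V) : Prop :=
  ∀ u ∈ H.support, ∀ v ∈ H.support, H.Reachable u v

/-- A finite cycle: a nonempty, finite, connected, 2-regular graph (on its support). -/
def IsFiniteCycleGraph {V : Type*} (H : SimpleGraph V) : Prop :=
  H.support.Nonempty ∧ H.support.Finite ∧ ConnectedOn H ∧ TwoRegularOn H

section Aux

open SimpleGraph

variable {V : Type*}

lemma ncard_two_finite {s : Set V} (h : s.ncard = 2) : s.Finite := by
  by_contra hinf
  rw [Set.Infinite.ncard hinf] at h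
  omega

/-- If `u` and `v` are joined by a walk in `H`, then in `H` minus the edge `s(x,y)`,
either `u` reaches `v`, or `u` reaches `x` or `y`. -/
lemma reach_delete_aux {H : SimpleGraph V} {x y u v : V} (p : H.Walk u v) :
    (H.deleteEdges {s(x,y)}).Reachable u v ∨
    (H.deleteEdges {s(x,y)}).Reachable u x ∨ (H.deleteEdges {s(x,y)}).Reachable u y := by
  induction p with
  | nil => exact Or.inl (Reachable.refl _)
  | @cons u w v h p ih =>
    by_cases hs : s(u, w) = s(x, y)
    · rcases Sym2.eq_iff.mp hs with ⟨rfl, rfl⟩ | ⟨rfl, rfl⟩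
      · exact Or.inr (Or.inl (Reachable.refl _))
      · exact Or.inr (Or.inr (Reachable.refl _))
    · have hadj : (H.deleteEdges {s(x,y)}).Adj u w := by
        rw [SimpleGraph.deleteEdges_adj]
        exact ⟨h, by simpa using hs⟩
      rcases ih with h1 | h1 | h1
      · exact Or.inl (hadj.reachable.trans h1)
      · exact Or.inr (Or.inl (hadj.reachable.trans h1))
      · exact Or.inr (Or.inr (hadj.reachable.trans h1))

/-- Deleting an edge of a finite 2-regular graph keeps its endpoints connected. -/
lemma cycle_delete_reach {H : SimpleGraph V} (hfin : H.support.Finite)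
    (hreg : ∀ v ∈ H.support, (H.neighborSet v).ncard = 2)
    {c d : V} (hcd : H.Adj c d) :
    (H.deleteEdges {s(c,d)}).Reachable c d := by
  classical
  set D := H.deleteEdges {s(c,d)} with hD
  by_contra hnr
  set S : Set V := {v | D.Reachable d v} with hS
  have hDle : D ≤ H := SimpleGraph.deleteEdges_le _
  have hdS : d ∈ S := Reachable.refl _
  have hcS : c ∉ S := fun h => hnr h.symm
  have hclosed : ∀ ⦃v⦄, v ∈ S → ∀ ⦃u⦄, D.Adj v u → u ∈ S :=
    fun v hv u h => hv.trans h.reachable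
  -- every element of S is in the support of H
  have hSsupp : S ⊆ H.support := by
    intro v hv
    by_cases hvd : v = d
    · subst hvd; exact ⟨c, hcd.symm⟩
    · obtain ⟨p⟩ := (hv : D.Reachable d v)
      obtain ⟨u, h, q, -⟩ := SimpleGraph.Walk.not_nil_iff.mp
        (SimpleGraph.Walk.not_nil_of_ne hvd (p := p.reverse))
      exact ⟨u, hDle h⟩
  have hSfin : S.Finite := hfin.subset hSsupp
  haveI : Fintype S := hSfin.fintype
  -- neighbor sets in D
  have hNd : D.neighborSet d = H.neighborSet d \ {c} := by
    ext u
    simp only [mem_neighborSet, hD, SimpleGraph.deleteEdges_adj, Set.mem_diff,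
      Set.mem_singleton_iff, Set.mem_singleton_iff]
    constructor
    · rintro ⟨h1, h2⟩
      refine ⟨h1, fun h => h2 ?_⟩
      subst h; rw [Sym2.eq_swap]
    · rintro ⟨h1, h2⟩
      refine ⟨h1, fun h => ?_⟩
      rcases Sym2.eq_iff.mp h with ⟨rfl, rfl⟩ | ⟨h3, rfl⟩
      · exact hcd.ne rfl
      · exact h2 rfl
  have hNdcard : (D.neighborSet d).ncard = 1 := by
    have h2 : (H.neighborSet d).ncard = 2 := hreg d ⟨c, hcd.symm⟩
    rw [hNd, Set.ncard_diff_singleton_of_mem (s := H.neighborSet d) hcd.symm, h2]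
  have hNv : ∀ v ∈ S, v ≠ d → (D.neighborSet v).ncard = 2 := by
    intro v hv hvd
    have hvc : v ≠ c := fun h => hcS (h ▸ hv)
    have : D.neighborSet v = H.neighborSet v := by
      ext u
      simp only [mem_neighborSet, hD, SimpleGraph.deleteEdges_adj, Set.mem_singleton_iff]
      refine ⟨fun h => h.1, fun h => ⟨h, fun he => ?_⟩⟩
      rcases Sym2.eq_iff.mp he with ⟨rfl, rfl⟩ | ⟨rfl, rfl⟩
      · exact hvc rfl
      · exact hvd rfl
    rw [this]
    exact hreg v (hSsupp hv)
  -- the induced graph on S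
  set K := D.induce S with hK
  have hNK : ∀ v : S, (K.neighborSet v : Set S).ncard = (D.neighborSet ↑v).ncard := by
    intro v
    have himg : Subtype.val '' (K.neighborSet v) = D.neighborSet ↑v := by
      ext u
      simp only [Set.mem_image, mem_neighborSet]
      constructor
      · rintro ⟨w, hw, rfl⟩
        exact hw
      · intro hu
        exact ⟨⟨u, hclosed v.2 hu⟩, hu, rfl⟩
    rw [← himg, Set.ncard_image_of_injective _ Subtype.val_injective]
  have hdeg : ∀ v : S, K.degree v = (D.neighborSet ↑v).ncard := by
    intro v
    rw [← hNK v, SimpleGraph.degree, SimpleGraph.neighborFinset_def,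
      ← Set.ncard_eq_toFinset_card']
  have hsum := SimpleGraph.sum_degrees_eq_twice_card_edges K
  have heven : Even (∑ v : S, K.degree v) := by rw [hsum]; exact even_two_mul _
  set d' : S := ⟨d, hdS⟩ with hd'
  have hodd : ∑ v : S, K.degree v = (∑ v ∈ Finset.univ.erase d', K.degree v) + 1 := by
    rw [← Finset.sum_erase_add Finset.univ _ (Finset.mem_univ d')]
    congr 1
    rw [hdeg d']
    exact hNdcard
  have heven2 : Even (∑ v ∈ Finset.univ.erase d', K.degree v) := by
    apply Finset.even_sum
    intro v hv
    rw [hdeg v, hNv ↑v v.2 (fun h => (Finset.mem_erase.mp hv).1 (Subtype.ext h))]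
    exact even_two
  rw [hodd] at heven
  simp [Nat.even_add_one, heven2] at heven

end Aux

open SimpleGraph in
theorem stmt_10 {V : Type*} (C₁ C₂ : SimpleGraph V)
    (hdisj : Disjoint C₁.support C₂.support)
    (hC₁conn : ConnectedOn C₁) (hC₁reg : TwoRegularOn C₁)
    (hC₂ : IsFiniteCycleGraph C₂)
    (a b c d : V) (he₁ : C₁.Adj a b) (he₂ : C₂.Adj c d)
    (hac : a ≠ c) (hbd : b ≠ d)
    (hnew₁ : ¬ (C₁ ⊔ C₂).Adj a c) (hnew₂ : ¬ (C₁ ⊔ C₂).Adj b d) :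
    ∀ G' : SimpleGraph V,
      G' = ((C₁ ⊔ C₂).deleteEdges {s(a, b), s(c, d)}) ⊔
            SimpleGraph.fromEdgeSet {s(a, c), s(b, d)} →
      G'.support = C₁.support ∪ C₂.support ∧ ConnectedOn G' ∧ TwoRegularOn G' := by
  classical
  obtain ⟨-, hC₂fin, hC₂conn, hC₂reg⟩ := hC₂
  intro G' hG'
  have ha : a ∈ C₁.support := ⟨b, he₁⟩
  have hb : b ∈ C₁.support := ⟨a, he₁.symm⟩
  have hc : c ∈ C₂.support := ⟨d, he₂⟩
  have hd : d ∈ C₂.support := ⟨c, he₂.symm⟩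
  have hdisj' : ∀ {v}, v ∈ C₁.support → v ∉ C₂.support :=
    fun h => Set.disjoint_left.mp hdisj h
  have hab : a ≠ b := he₁.ne
  have hcd : c ≠ d := he₂.ne
  have had : a ≠ d := fun h => hdisj' ha (h ▸ hd)
  have hbc : b ≠ c := fun h => hdisj' hb (h ▸ hc)
  -- adjacency characterization of G'
  have hGadj : ∀ u v, G'.Adj u v ↔
      (((C₁.Adj u v ∨ C₂.Adj u v) ∧ s(u,v) ≠ s(a,b) ∧ s(u,v) ≠ s(c,d)) ∨
        (s(u,v) = s(a,c) ∨ s(u,v) = s(b,d))) := by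
    intro u v
    have hne1 : s(u,v) = s(a,c) → u ≠ v := by
      intro h
      rcases Sym2.eq_iff.mp h with ⟨rfl, rfl⟩ | ⟨rfl, rfl⟩
      · exact hac
      · exact hac.symm
    have hne2 : s(u,v) = s(b,d) → u ≠ v := by
      intro h
      rcases Sym2.eq_iff.mp h with ⟨rfl, rfl⟩ | ⟨rfl, rfl⟩
      · exact hbd
      · exact hbd.symm
    rw [hG']
    simp only [sup_adj, deleteEdges_adj, fromEdgeSet_adj, Set.mem_insert_iff,
      Set.mem_singleton_iff]
    constructor
    · rintro (⟨h1, h2⟩ | ⟨h1, -⟩)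
      · push_neg at h2
        exact Or.inl ⟨h1, h2.1, h2.2⟩
      · exact Or.inr h1
    · rintro (⟨h1, h2, h3⟩ | h1)
      · refine Or.inl ⟨h1, ?_⟩
        push_neg
        exact ⟨h2, h3⟩
      · refine Or.inr ⟨h1, ?_⟩
        rcases h1 with h1 | h1
        · exact hne1 h1
        · exact hne2 h1
  have hGac : G'.Adj a c := (hGadj a c).mpr (Or.inr (Or.inl rfl))
  have hGbd : G'.Adj b d := (hGadj b d).mpr (Or.inr (Or.inr rfl))
  -- support of G'
  have hsupp : G'.support = C₁.support ∪ C₂.support := by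
    apply Set.Subset.antisymm
    · rintro v ⟨u, hu⟩
      rcases (hGadj v u).mp hu with ⟨h1 | h1, -, -⟩ | h1 | h1
      · exact Or.inl ⟨u, h1⟩
      · exact Or.inr ⟨u, h1⟩
      · rcases Sym2.eq_iff.mp h1 with ⟨rfl, rfl⟩ | ⟨rfl, rfl⟩
        · exact Or.inl ha
        · exact Or.inr hc
      · rcases Sym2.eq_iff.mp h1 with ⟨rfl, rfl⟩ | ⟨rfl, rfl⟩
        · exact Or.inl hb
        · exact Or.inr hd
    · rintro v (hv | hv)
      · by_cases hva : v = a
        · exact hva ▸ ⟨c, hGac⟩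
        by_cases hvb : v = b
        · exact hvb ▸ ⟨d, hGbd⟩
        obtain ⟨u, hu⟩ := hv
        refine ⟨u, (hGadj v u).mpr (Or.inl ⟨Or.inl hu, ?_, ?_⟩)⟩
        · intro h
          rcases Sym2.eq_iff.mp h with ⟨rfl, rfl⟩ | ⟨rfl, rfl⟩
          · exact hva rfl
          · exact hvb rfl
        · intro h
          rcases Sym2.eq_iff.mp h with ⟨rfl, rfl⟩ | ⟨rfl, rfl⟩
          · exact hdisj' ⟨u, hu⟩ hc
          · exact hdisj' ⟨u, hu⟩ hd
      · by_cases hvc : v = c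
        · exact hvc ▸ ⟨a, hGac.symm⟩
        by_cases hvd : v = d
        · exact hvd ▸ ⟨b, hGbd.symm⟩
        obtain ⟨u, hu⟩ := hv
        refine ⟨u, (hGadj v u).mpr (Or.inl ⟨Or.inr hu, ?_, ?_⟩)⟩
        · intro h
          rcases Sym2.eq_iff.mp h with ⟨rfl, rfl⟩ | ⟨rfl, rfl⟩
          · exact hdisj' ha ⟨u, hu⟩
          · exact hdisj' hb ⟨u, hu⟩
        · intro h
          rcases Sym2.eq_iff.mp h with ⟨rfl, rfl⟩ | ⟨rfl, rfl⟩
          · exact hvc rfl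
          · exact hvd rfl
  -- the two deleted-edge subgraphs are subgraphs of G'
  have hD₁le : C₁.deleteEdges {s(a,b)} ≤ G' := by
    intro u v huv
    rw [deleteEdges_adj] at huv
    obtain ⟨h1, h2⟩ := huv
    refine (hGadj u v).mpr (Or.inl ⟨Or.inl h1, by simpa using h2, ?_⟩)
    intro h
    rcases Sym2.eq_iff.mp h with ⟨rfl, rfl⟩ | ⟨rfl, rfl⟩
    · exact hdisj' ⟨v, h1⟩ hc
    · exact hdisj' ⟨v, h1⟩ hd
  have hD₂le : C₂.deleteEdges {s(c,d)} ≤ G' := by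
    intro u v huv
    rw [deleteEdges_adj] at huv
    obtain ⟨h1, h2⟩ := huv
    refine (hGadj u v).mpr (Or.inl ⟨Or.inr h1, ?_, by simpa using h2⟩)
    intro h
    rcases Sym2.eq_iff.mp h with ⟨rfl, rfl⟩ | ⟨rfl, rfl⟩
    · exact hdisj' ha ⟨v, h1⟩
    · exact hdisj' hb ⟨v, h1⟩
  -- connectivity
  have hreach1 : ∀ v ∈ C₁.support,
      (C₁.deleteEdges {s(a,b)}).Reachable v a ∨ (C₁.deleteEdges {s(a,b)}).Reachable v b := by
    intro v hv
    obtain ⟨p⟩ := hC₁conn v hv a ha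
    rcases reach_delete_aux (x := a) (y := b) p with h | h | h
    exacts [Or.inl h, Or.inl h, Or.inr h]
  have hreach2 : ∀ v ∈ C₂.support,
      (C₂.deleteEdges {s(c,d)}).Reachable v c ∨ (C₂.deleteEdges {s(c,d)}).Reachable v d := by
    intro v hv
    obtain ⟨p⟩ := hC₂conn v hv c hc
    rcases reach_delete_aux (x := c) (y := d) p with h | h | h
    exacts [Or.inl h, Or.inl h, Or.inr h]
  have hcd' : G'.Reachable c d := (cycle_delete_reach hC₂fin hC₂reg he₂).mono hD₂le
  have hRac : G'.Reachable a c := hGac.reachable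
  have hRbd : G'.Reachable b d := hGbd.reachable
  have hRa : ∀ v ∈ G'.support, G'.Reachable v a := by
    intro v hv
    rw [hsupp] at hv
    have hca : G'.Reachable c a := hRac.symm
    have hda : G'.Reachable d a := hcd'.symm.trans hca
    have hba : G'.Reachable b a := hRbd.trans hda
    rcases hv with hv | hv
    · rcases hreach1 v hv with h | h
      · exact h.mono hD₁le
      · exact (h.mono hD₁le).trans hba
    · rcases hreach2 v hv with h | h
      · exact (h.mono hD₂le).trans hca
      · exact (h.mono hD₂le).trans hda
  have hconn : ConnectedOn G' := fun u hu v hv => (hRa u hu).trans (hRa v hv).symm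
  -- 2-regularity
  have hsub1 : ∀ {u v}, C₁.Adj u v → v ∈ C₁.support := fun h => ⟨_, h.symm⟩
  have hsub2 : ∀ {u v}, C₂.Adj u v → v ∈ C₂.support := fun h => ⟨_, h.symm⟩
  have hN1 : ∀ v ∈ C₁.support, v ≠ a → v ≠ b → G'.neighborSet v = C₁.neighborSet v := by
    intro v hv hva hvb
    ext u
    simp only [mem_neighborSet]
    rw [hGadj]
    constructor
    · rintro (⟨h1 | h1, -, -⟩ | h1 | h1)
      · exact h1
      · exact absurd ⟨u, h1⟩ (hdisj' hv)
      · rcases Sym2.eq_iff.mp h1 with ⟨rfl, rfl⟩ | ⟨rfl, rfl⟩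
        · exact absurd rfl hva
        · exact absurd hc (hdisj' hv)
      · rcases Sym2.eq_iff.mp h1 with ⟨rfl, rfl⟩ | ⟨rfl, rfl⟩
        · exact absurd rfl hvb
        · exact absurd hd (hdisj' hv)
    · intro h1
      refine Or.inl ⟨Or.inl h1, ?_, ?_⟩
      · intro h
        rcases Sym2.eq_iff.mp h with ⟨rfl, rfl⟩ | ⟨rfl, rfl⟩
        · exact hva rfl
        · exact hvb rfl
      · intro h
        rcases Sym2.eq_iff.mp h with ⟨rfl, rfl⟩ | ⟨rfl, rfl⟩
        · exact hdisj' hv hc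
        · exact hdisj' hv hd
  have hN2 : ∀ v ∈ C₂.support, v ≠ c → v ≠ d → G'.neighborSet v = C₂.neighborSet v := by
    intro v hv hvc hvd
    ext u
    simp only [mem_neighborSet]
    rw [hGadj]
    constructor
    · rintro (⟨h1 | h1, -, -⟩ | h1 | h1)
      · exact absurd ⟨u, h1⟩ (fun h => hdisj' h hv)
      · exact h1
      · rcases Sym2.eq_iff.mp h1 with ⟨rfl, rfl⟩ | ⟨rfl, rfl⟩
        · exact absurd hv (hdisj' ha)
        · exact absurd rfl hvc
      · rcases Sym2.eq_iff.mp h1 with ⟨rfl, rfl⟩ | ⟨rfl, rfl⟩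
        · exact absurd hv (hdisj' hb)
        · exact absurd rfl hvd
    · intro h1
      refine Or.inl ⟨Or.inr h1, ?_, ?_⟩
      · intro h
        rcases Sym2.eq_iff.mp h with ⟨rfl, rfl⟩ | ⟨rfl, rfl⟩
        · exact hdisj' ha hv
        · exact hdisj' hb hv
      · intro h
        rcases Sym2.eq_iff.mp h with ⟨rfl, rfl⟩ | ⟨rfl, rfl⟩
        · exact hvc rfl
        · exact hvd rfl
  -- neighbor sets at the four special vertices
  have hNa : G'.neighborSet a = insert c (C₁.neighborSet a \ {b}) := by
    ext u
    simp only [mem_neighborSet, Set.mem_insert_iff, Set.mem_diff, Set.mem_singleton_iff]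
    rw [hGadj]
    constructor
    · rintro (⟨h1 | h1, h2, h3⟩ | h1 | h1)
      · refine Or.inr ⟨h1, fun h => h2 ?_⟩
        rw [h]
      · exact absurd ⟨u, h1⟩ (hdisj' ha)
      · rcases Sym2.eq_iff.mp h1 with ⟨-, rfl⟩ | ⟨h4, -⟩
        · exact Or.inl rfl
        · exact absurd h4 hac
      · rcases Sym2.eq_iff.mp h1 with ⟨h4, -⟩ | ⟨h4, -⟩
        · exact absurd h4 hab
        · exact absurd h4 had
    · rintro (rfl | ⟨h1, h2⟩)
      · exact Or.inr (Or.inl rfl)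
      · refine Or.inl ⟨Or.inl h1, ?_, ?_⟩
        · intro h
          rcases Sym2.eq_iff.mp h with ⟨-, rfl⟩ | ⟨h4, -⟩
          · exact h2 rfl
          · exact hab h4
        · intro h
          rcases Sym2.eq_iff.mp h with ⟨h4, -⟩ | ⟨h4, -⟩
          · exact hdisj' ha (h4 ▸ hc)
          · exact hdisj' ha (h4 ▸ hd)
  have hNb : G'.neighborSet b = insert d (C₁.neighborSet b \ {a}) := by
    ext u
    simp only [mem_neighborSet, Set.mem_insert_iff, Set.mem_diff, Set.mem_singleton_iff]
    rw [hGadj]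
    constructor
    · rintro (⟨h1 | h1, h2, h3⟩ | h1 | h1)
      · refine Or.inr ⟨h1, fun h => h2 ?_⟩
        rw [h, Sym2.eq_swap]
      · exact absurd ⟨u, h1⟩ (hdisj' hb)
      · rcases Sym2.eq_iff.mp h1 with ⟨h4, -⟩ | ⟨h4, -⟩
        · exact absurd h4 hab.symm
        · exact absurd h4 hbc
      · rcases Sym2.eq_iff.mp h1 with ⟨-, rfl⟩ | ⟨h4, -⟩
        · exact Or.inl rfl
        · exact absurd h4 hbd
    · rintro (rfl | ⟨h1, h2⟩)
      · exact Or.inr (Or.inr rfl)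
      · refine Or.inl ⟨Or.inl h1, ?_, ?_⟩
        · intro h
          rcases Sym2.eq_iff.mp h with ⟨h4, -⟩ | ⟨-, rfl⟩
          · exact hab h4.symm
          · exact h2 rfl
        · intro h
          rcases Sym2.eq_iff.mp h with ⟨h4, -⟩ | ⟨h4, -⟩
          · exact hdisj' hb (h4 ▸ hc)
          · exact hdisj' hb (h4 ▸ hd)
  have hNc : G'.neighborSet c = insert a (C₂.neighborSet c \ {d}) := by
    ext u
    simp only [mem_neighborSet, Set.mem_insert_iff, Set.mem_diff, Set.mem_singleton_iff]
    rw [hGadj]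
    constructor
    · rintro (⟨h1 | h1, h2, h3⟩ | h1 | h1)
      · exact absurd hc (hdisj' ⟨u, h1⟩)
      · refine Or.inr ⟨h1, fun h => h3 ?_⟩
        rw [h]
      · rcases Sym2.eq_iff.mp h1 with ⟨h4, -⟩ | ⟨-, rfl⟩
        · exact absurd h4 hac.symm
        · exact Or.inl rfl
      · rcases Sym2.eq_iff.mp h1 with ⟨h4, -⟩ | ⟨h4, -⟩
        · exact absurd h4 hbc.symm
        · exact absurd h4 hcd
    · rintro (rfl | ⟨h1, h2⟩)
      · exact Or.inr (Or.inl (Sym2.eq_swap ..))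
      · refine Or.inl ⟨Or.inr h1, ?_, ?_⟩
        · intro h
          rcases Sym2.eq_iff.mp h with ⟨h4, -⟩ | ⟨h4, -⟩
          · exact hdisj' (h4 ▸ ha) hc
          · exact hdisj' (h4 ▸ hb) hc
        · intro h
          rcases Sym2.eq_iff.mp h with ⟨-, rfl⟩ | ⟨h4, -⟩
          · exact h2 rfl
          · exact hcd h4
  have hNd' : G'.neighborSet d = insert b (C₂.neighborSet d \ {c}) := by
    ext u
    simp only [mem_neighborSet, Set.mem_insert_iff, Set.mem_diff, Set.mem_singleton_iff]
    rw [hGadj]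
    constructor
    · rintro (⟨h1 | h1, h2, h3⟩ | h1 | h1)
      · exact absurd hd (hdisj' ⟨u, h1⟩)
      · refine Or.inr ⟨h1, fun h => h3 ?_⟩
        rw [h, Sym2.eq_swap]
      · rcases Sym2.eq_iff.mp h1 with ⟨h4, -⟩ | ⟨h4, -⟩
        · exact absurd h4 had.symm
        · exact absurd h4 hcd.symm
      · rcases Sym2.eq_iff.mp h1 with ⟨h4, -⟩ | ⟨-, rfl⟩
        · exact absurd h4 hbd.symm
        · exact Or.inl rfl
    · rintro (rfl | ⟨h1, h2⟩)
      · exact Or.inr (Or.inr (Sym2.eq_swap ..))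
      · refine Or.inl ⟨Or.inr h1, ?_, ?_⟩
        · intro h
          rcases Sym2.eq_iff.mp h with ⟨h4, -⟩ | ⟨h4, -⟩
          · exact hdisj' (h4 ▸ ha) hd
          · exact hdisj' (h4 ▸ hb) hd
        · intro h
          rcases Sym2.eq_iff.mp h with ⟨h4, -⟩ | ⟨-, rfl⟩
          · exact hcd h4.symm
          · exact h2 rfl
  -- cardinality computations
  have hcard : ∀ (H : SimpleGraph V) (x y z : V), H.Adj x y →
      (H.neighborSet x).ncard = 2 → z ∉ H.support →
      (insert z (H.neighborSet x \ {y})).ncard = 2 := by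
    intro H x y z hxy h2 hz
    have hfin : (H.neighborSet x).Finite := ncard_two_finite h2
    have h1 : (H.neighborSet x \ {y}).ncard = 1 := by
      rw [Set.ncard_diff_singleton_of_mem (s := H.neighborSet x) hxy, h2]
    have hznot : z ∉ H.neighborSet x \ {y} := fun h => hz ⟨x, h.1.symm⟩
    rw [Set.ncard_insert_of_notMem hznot (hfin.diff (t := {y})), h1]
  have hka : (G'.neighborSet a).ncard = 2 := by
    rw [hNa]
    exact hcard C₁ a b c he₁ (hC₁reg a ha) (fun h => hdisj' h hc)
  have hkb : (G'.neighborSet b).ncard = 2 := by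
    rw [hNb]
    exact hcard C₁ b a d he₁.symm (hC₁reg b hb) (fun h => hdisj' h hd)
  have hkc : (G'.neighborSet c).ncard = 2 := by
    rw [hNc]
    exact hcard C₂ c d a he₂ (hC₂reg c hc) (hdisj' ha)
  have hkd : (G'.neighborSet d).ncard = 2 := by
    rw [hNd']
    exact hcard C₂ d c b he₂.symm (hC₂reg d hd) (hdisj' hb)
  refine ⟨hsupp, hconn, ?_⟩
  intro v hv
  rw [hsupp] at hv
  rcases hv with hv | hv
  · by_cases hva : v = a
    · exact hva ▸ hka
    by_cases hvb : v = b
    · exact hvb ▸ hkb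
    rw [hN1 v hv hva hvb]
    exact hC₁reg v hv
  · by_cases hvc : v = c
    · exact hvc ▸ hkc
    by_cases hvd : v = d
    · exact hvd ▸ hkd
    rw [hN2 v hv hvc hvd]
    exact hC₂reg v hv
end

section
/- Every Cayley graph of a countably infinite abelian group with respect to a finite generating set contains a Hamiltonian path or double-ray; in particular, for Γ = ℤ with generating set {1}, the Cayley graph is itself a Hamiltonian double-ray. -/
set_option linter.unusedSectionVars false
set_option linter.unusedVariables false
set_option linter.unusedTactic false
set_option maxHeartbeats 1000000


/-- The Cayley graph of an additive abelian group with connection set `S`. -/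
def cayley (Γ : Type*) [AddCommGroup Γ] (S : Set Γ) : SimpleGraph Γ :=
  SimpleGraph.fromRel (fun x y => ∃ g ∈ S, y = x + g)

/-- A Hamiltonian (spanning) double-ray: the vertex set is infinite and the graph is
connected and 2-regular. -/
def IsHamDoubleRay {V : Type*} (H : SimpleGraph V) : Prop :=
  Infinite V ∧ H.Connected ∧ ∀ v : V, (H.neighborSet v).ncard = 2

section ray
variable {Γ : Type*} [AddCommGroup Γ]

def stp (S : Set Γ) (x y : Γ) : Prop := y - x ∈ S ∨ x - y ∈ S

lemma stp_symm {S : Set Γ} {x y : Γ} (h : stp S x y) : stp S y x := h.symm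

lemma cayley_adj {S : Set Γ} {x y : Γ} : (cayley Γ S).Adj x y ↔ x ≠ y ∧ stp S x y := by
  unfold cayley stp
  rw [SimpleGraph.fromRel_adj]
  constructor
  · rintro ⟨h, h2⟩
    refine ⟨h, ?_⟩
    rcases h2 with ⟨g, hg, rfl⟩ | ⟨g, hg, rfl⟩
    · left; simpa using hg
    · right; simpa using hg
  · rintro ⟨h, h2⟩
    refine ⟨h, ?_⟩
    rcases h2 with h2 | h2
    · exact Or.inl ⟨y - x, h2, by abel⟩
    · exact Or.inr ⟨x - y, h2, by abel⟩

def rayGraph (f : ℤ → Γ) : SimpleGraph Γ :=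
  SimpleGraph.fromRel (fun x y => ∃ i, x = f i ∧ y = f (i + 1))

lemma rayGraph_adj {f : ℤ → Γ} {x y : Γ} :
    (rayGraph f).Adj x y ↔ x ≠ y ∧
      ((∃ i, x = f i ∧ y = f (i+1)) ∨ (∃ i, y = f i ∧ x = f (i+1))) := by
  unfold rayGraph; rw [SimpleGraph.fromRel_adj]

lemma rayGraph_isHam {S : Set Γ} {f : ℤ → Γ} (hinj : Function.Injective f)
    (hsurj : Function.Surjective f) (hstp : ∀ i, stp S (f i) (f (i + 1)))
    [Infinite Γ] :
    rayGraph f ≤ cayley Γ S ∧ IsHamDoubleRay (rayGraph f) := by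
  have hne : ∀ i j : ℤ, i ≠ j → f i ≠ f j := fun i j h hc => h (hinj hc)
  have hadj : ∀ i : ℤ, (rayGraph f).Adj (f i) (f (i+1)) := by
    intro i
    exact rayGraph_adj.2 ⟨hne i (i+1) (by omega), Or.inl ⟨i, rfl, rfl⟩⟩
  constructor
  · intro x y hxy
    rw [rayGraph_adj] at hxy
    rw [cayley_adj]
    refine ⟨hxy.1, ?_⟩
    rcases hxy.2 with ⟨i, rfl, rfl⟩ | ⟨i, rfl, rfl⟩
    · exact hstp i
    · exact stp_symm (hstp i)
  · have : Nonempty Γ := ⟨f 0⟩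
    refine ⟨inferInstance, ⟨?_⟩, ?_⟩
    · intro x y
      obtain ⟨i, rfl⟩ := hsurj x
      obtain ⟨j, rfl⟩ := hsurj y
      have key : ∀ k : ℤ, (rayGraph f).Reachable (f 0) (f k) := by
        intro k
        induction k using Int.induction_on with
        | zero => exact SimpleGraph.Reachable.refl _
        | succ n ih => exact ih.trans (hadj n).reachable
        | pred n ih =>
            have h := (hadj (-(n:ℤ) - 1)).reachable.symm
            have e : (-(n:ℤ) - 1) + 1 = -(n:ℤ) := by ring
            rw [e] at h
            exact ih.trans h
      exact (key i).symm.trans (key j)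
    · intro v
      obtain ⟨i, rfl⟩ := hsurj v
      have : (rayGraph f).neighborSet (f i) = {f (i - 1), f (i + 1)} := by
        ext w
        simp only [SimpleGraph.mem_neighborSet, Set.mem_insert_iff, Set.mem_singleton_iff]
        rw [rayGraph_adj]
        constructor
        · rintro ⟨hne', ⟨j, hj, rfl⟩ | ⟨j, rfl, hj⟩⟩
          · have : i = j := hinj hj
            subst this; right; rfl
          · rename_i hj
            have : i = j + 1 := hinj hj
            left; rw [this]; ring_nf
        · rintro (rfl | rfl)
          · exact ⟨hne i (i-1) (by omega) , Or.inr ⟨i - 1, rfl, by ring_nf⟩⟩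
          · exact ⟨hne i (i+1) (by omega), Or.inl ⟨i, rfl, rfl⟩⟩
      rw [this]
      exact Set.ncard_pair (hne (i-1) (i+1) (by omega))

lemma int_case : IsHamDoubleRay (cayley ℤ ({1} : Set ℤ)) := by
  have h : cayley ℤ ({1} : Set ℤ) = rayGraph (id : ℤ → ℤ) := by
    ext x y
    rw [cayley_adj, rayGraph_adj]
    unfold stp
    simp only [Set.mem_singleton_iff, id_eq]
    constructor
    · rintro ⟨h1, h2 | h2⟩
      · exact ⟨h1, Or.inl ⟨x, rfl, by omega⟩⟩
      · exact ⟨h1, Or.inr ⟨y, rfl, by omega⟩⟩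
    · rintro ⟨h1, ⟨i, rfl, rfl⟩ | ⟨i, rfl, rfl⟩⟩
      · exact ⟨h1, Or.inl (by omega)⟩
      · exact ⟨h1, Or.inr (by omega)⟩
  rw [h]
  exact (rayGraph_isHam (S := ({1} : Set ℤ)) (f := id) (fun a b h => h) (fun a => ⟨a, rfl⟩)
    (fun i => Or.inl (by simp))).2

end ray

/-- boustrophedon row within block of size `n` -/
def sRow (n j : ℕ) : ℕ := if (j / n) % 2 = 0 then j % n else n - 1 - j % n

lemma sRow_lt {n : ℕ} (hn : 0 < n) (j : ℕ) : sRow n j < n := by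
  unfold sRow; have := Nat.mod_lt j hn; split <;> omega

lemma sF_inj {n : ℕ} (hn : 0 < n) {j1 j2 : ℕ}
    (h1 : j1 / n = j2 / n) (h2 : sRow n j1 = sRow n j2) : j1 = j2 := by
  have e1 := Nat.div_add_mod j1 n
  have e2 := Nat.div_add_mod j2 n
  have m1 : j1 % n < n := Nat.mod_lt _ hn
  have m2 : j2 % n < n := Nat.mod_lt _ hn
  unfold sRow at h2
  rw [h1] at e1 h2
  generalize n * (j2 / n) = P at e1 e2
  split at h2 <;> omega

lemma sF_surj {n : ℕ} (hn : 0 < n) {m b r : ℕ} (hb : b < m) (hr : r < n) :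
    ∃ j, j < n * m ∧ j / n = b ∧ sRow n j = r := by
  refine ⟨n * b + (if b % 2 = 0 then r else n - 1 - r), ?_, ?_, ?_⟩
  · have h1 : (if b % 2 = 0 then r else n - 1 - r) < n := by split <;> omega
    calc n * b + (if b % 2 = 0 then r else n - 1 - r) < n * b + n := by omega
    _ = n * (b + 1) := by ring
    _ ≤ n * m := Nat.mul_le_mul_left n hb
  · have h1 : (if b % 2 = 0 then r else n - 1 - r) < n := by split <;> omega
    rw [Nat.mul_add_div hn, Nat.div_eq_of_lt h1]
    omega
  · have h1 : (if b % 2 = 0 then r else n - 1 - r) < n := by split <;> omega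
    have hd : (n * b + (if b % 2 = 0 then r else n - 1 - r)) / n = b := by
      rw [Nat.mul_add_div hn, Nat.div_eq_of_lt h1]
      omega
    unfold sRow
    rw [hd, Nat.mul_add_mod, Nat.mod_eq_of_lt h1]
    split <;> omega

lemma sF_step {n : ℕ} (hn : 0 < n) (j : ℕ) :
    ((j+1) / n = j / n ∧ (sRow n (j+1) = sRow n j + 1 ∨ sRow n j = sRow n (j+1) + 1))
    ∨ ((j+1) / n = j / n + 1 ∧ sRow n (j+1) = sRow n j) := by
  have e := Nat.div_add_mod j n
  have m1 : j % n < n := Nat.mod_lt _ hn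
  by_cases h : j % n + 1 < n
  · left
    have hj1 : j + 1 = n * (j / n) + (j % n + 1) := by omega
    have hd : (j+1) / n = j / n := by rw [hj1, Nat.mul_add_div hn, Nat.div_eq_of_lt h]; omega
    have hm : (j+1) % n = j % n + 1 := by rw [hj1, Nat.mul_add_mod, Nat.mod_eq_of_lt h]
    refine ⟨hd, ?_⟩
    unfold sRow
    rw [hd, hm]
    split <;> omega
  · right
    have hx : n * (j / n + 1) = n * (j / n) + n := by ring
    have hj1 : j + 1 = n * (j / n + 1) + 0 := by omega
    have hd : (j+1) / n = j / n + 1 := by rw [hj1, Nat.mul_add_div hn]; simp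
    have hm : (j+1) % n = 0 := by rw [hj1, Nat.mul_add_mod]; simp
    refine ⟨hd, ?_⟩
    unfold sRow
    rw [hd, hm]
    split <;> split <;> omega

/-- double-ray snake through `ℤ × [0,m)`: column, row -/
def sZ (m : ℕ) (n : ℤ) : ℤ × ℕ :=
  if 0 ≤ n then ((n.toNat / m : ℕ) + 1, sRow m n.toNat)
  else (-((-1 - n).toNat / m : ℕ), sRow m (-1 - n).toNat)

lemma sZ_row_lt {m : ℕ} (hm : 0 < m) (n : ℤ) : (sZ m n).2 < m := by
  unfold sZ; split <;> exact sRow_lt hm _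

lemma sZ_inj {m : ℕ} (hm : 0 < m) : Function.Injective (sZ m) := by
  intro n1 n2 h
  unfold sZ at h
  split at h <;> split at h
  · rw [Prod.ext_iff] at h
    have h1 : n1.toNat / m = n2.toNat / m := by
      have := h.1; omega
    have := sF_inj hm h1 h.2
    omega
  · rw [Prod.ext_iff] at h
    have := h.1
    have h1 : (0:ℤ) ≤ (n1.toNat / m : ℕ) := by positivity
    have h2 : (0:ℤ) ≤ (((-1 - n2).toNat / m : ℕ) : ℤ) := by positivity
    omega
  · rw [Prod.ext_iff] at h
    have := h.1
    have h1 : (0:ℤ) ≤ (n2.toNat / m : ℕ) := by positivity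
    have h2 : (0:ℤ) ≤ (((-1 - n1).toNat / m : ℕ) : ℤ) := by positivity
    omega
  · rw [Prod.ext_iff] at h
    have h1 : (-1 - n1).toNat / m = (-1 - n2).toNat / m := by
      have := h.1; omega
    have := sF_inj hm h1 h.2
    omega

lemma sZ_surj {m : ℕ} (hm : 0 < m) (c : ℤ) (r : ℕ) (hr : r < m) :
    ∃ n : ℤ, sZ m n = (c, r) := by
  by_cases hc : 1 ≤ c
  · obtain ⟨j, hj, hjd, hjr⟩ := sF_surj hm (show (c-1).toNat < (c-1).toNat + 1 by omega) hr
    refine ⟨(j : ℤ), ?_⟩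
    unfold sZ
    rw [if_pos (by positivity)]
    simp only [Int.toNat_natCast]
    rw [hjd, hjr]
    have : ((c-1).toNat : ℤ) = c - 1 := by omega
    rw [Prod.ext_iff]
    constructor
    · simp only []
      omega
    · rfl
  · obtain ⟨j, hj, hjd, hjr⟩ := sF_surj hm (show (-c).toNat < (-c).toNat + 1 by omega) hr
    refine ⟨-1 - (j : ℤ), ?_⟩
    unfold sZ
    rw [if_neg (by omega)]
    have h1 : (-1 - (-1 - (j:ℤ))).toNat = j := by omega
    rw [h1, hjd, hjr]
    rw [Prod.ext_iff]
    exact ⟨by simp; omega, rfl⟩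

lemma sZ_step {m : ℕ} (hm : 0 < m) (n : ℤ) :
    ((sZ m n).1 = (sZ m (n+1)).1 ∧
      ((sZ m n).2 = (sZ m (n+1)).2 + 1 ∨ (sZ m (n+1)).2 = (sZ m n).2 + 1))
    ∨ ((sZ m n).2 = (sZ m (n+1)).2 ∧
      ((sZ m n).1 = (sZ m (n+1)).1 + 1 ∨ (sZ m (n+1)).1 = (sZ m n).1 + 1)) := by
  rcases lt_trichotomy n (-1) with hn | hn | hn
  · have h0 : ¬ (0 ≤ n) := by omega
    have h0' : ¬ (0 ≤ n + 1) := by omega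
    unfold sZ
    rw [if_neg h0, if_neg h0']
    have hj : (-1 - n).toNat = (-1 - (n+1)).toNat + 1 := by omega
    rw [hj]
    rcases sF_step hm ((-1 - (n+1)).toNat) with ⟨hd, hr⟩ | ⟨hd, hr⟩
    · left
      exact ⟨by simp only []; omega, by simp only []; omega⟩
    · right
      exact ⟨by simp only []; omega, by simp only []; omega⟩
  · subst hn
    have h1 : sZ m (-1) = (-((0 / m : ℕ) : ℤ), sRow m 0) := by
      unfold sZ; norm_num
    have h2 : sZ m (-1 + 1) = (((0 / m : ℕ) : ℤ) + 1, sRow m 0) := by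
      unfold sZ; norm_num
    rw [h1, h2]
    right
    refine ⟨rfl, ?_⟩
    right
    simp [Nat.zero_div]
  · have h0 : (0:ℤ) ≤ n := by omega
    have h0' : (0:ℤ) ≤ n + 1 := by omega
    unfold sZ
    rw [if_pos h0, if_pos h0']
    have hj : (n + 1).toNat = n.toNat + 1 := by omega
    rw [hj]
    rcases sF_step hm n.toNat with ⟨hd, hr⟩ | ⟨hd, hr⟩
    · left
      exact ⟨by simp only []; omega, by simp only []; omega⟩
    · right
      exact ⟨by simp only []; omega, by simp only []; omega⟩

/-- symmetric unit-step relation on the grid -/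
def adjStep (p q : ℤ × ℤ) : Prop :=
  (p.1 = q.1 ∧ (p.2 = q.2 + 1 ∨ q.2 = p.2 + 1)) ∨ (p.2 = q.2 ∧ (p.1 = q.1 + 1 ∨ q.1 = p.1 + 1))

lemma adjStep_symm {p q : ℤ × ℤ} (h : adjStep p q) : adjStep q p := by
  unfold adjStep at *; tauto

/-- path along shell `t` of the upper half plane (even orientation), `0 ≤ o ≤ 4t` -/
def spF (t o : ℤ) : ℤ × ℤ :=
  if o ≤ t then (-t, o) else if o ≤ 3*t then (o - 2*t, t) else (t, 4*t - o)

lemma spF_mem {t o : ℤ} (h0 : 0 ≤ o) (h4 : o ≤ 4*t) :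
    0 ≤ (spF t o).2 ∧ (spF t o).1 ≤ t ∧ -t ≤ (spF t o).1 ∧ (spF t o).2 ≤ t ∧
      ((spF t o).1 = t ∨ (spF t o).1 = -t ∨ (spF t o).2 = t) := by
  unfold spF; split_ifs <;> dsimp only <;> omega

lemma spF_inj {t o1 o2 : ℤ} (h1 : 0 ≤ o1) (h2 : o1 ≤ 4*t) (h3 : 0 ≤ o2) (h4 : o2 ≤ 4*t)
    (h : spF t o1 = spF t o2) : o1 = o2 := by
  unfold spF at h
  split_ifs at h <;> simp only [Prod.mk.injEq] at h <;> omega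

lemma spF_surj {t x y : ℤ} (hy : 0 ≤ y) (h1 : x ≤ t) (h2 : -t ≤ x) (h3 : y ≤ t)
    (h4 : x = t ∨ x = -t ∨ y = t) :
    ∃ o, 0 ≤ o ∧ o ≤ 4*t ∧ spF t o = (x, y) := by
  have ht : 0 ≤ t := by omega
  by_cases hx : x = -t
  · refine ⟨y, by omega, by omega, ?_⟩
    unfold spF
    rw [if_pos h3, hx]
  · by_cases hyt : y = t
    · refine ⟨x + 2*t, by omega, by omega, ?_⟩
      unfold spF
      rw [if_neg (by omega), if_pos (by omega), Prod.mk.injEq]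
      omega
    · have hxt : x = t := by tauto
      refine ⟨4*t - y, by omega, by omega, ?_⟩
      unfold spF
      rw [if_neg (by omega), if_neg (by omega), Prod.mk.injEq]
      omega

lemma spF_step {t o : ℤ} (h0 : 0 ≤ o) (h4 : o + 1 ≤ 4*t) :
    adjStep (spF t o) (spF t (o+1)) := by
  unfold adjStep spF
  split_ifs <;> dsimp only <;> omega

/-- shell index of `n` -/
def tOf (n : ℕ) : ℕ := (Nat.sqrt (8*n+1) + 1)/4

lemma tOf_spec (n : ℕ) : 2*(tOf n)*(tOf n) ≤ n + tOf n ∧ n + 1 ≤ 2*(tOf n)*(tOf n) + 3*(tOf n) + 1 := by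
  set u := Nat.sqrt (8*n+1) with hu
  have h1 : u*u ≤ 8*n+1 := Nat.sqrt_le (8*n+1)
  have h2 : 8*n+1 < (u+1)*(u+1) := Nat.lt_succ_sqrt (8*n+1)
  set t := tOf n with ht
  have htu : t = (u+1)/4 := rfl
  have h3 : 4*t ≤ u + 1 ∧ u + 1 < 4*t + 4 := by omega
  have hz1 : ((u:ℤ))*(u:ℤ) ≤ 8*(n:ℤ)+1 := by exact_mod_cast h1
  have hz2 : 8*(n:ℤ)+1 < ((u:ℤ)+1)*((u:ℤ)+1) := by exact_mod_cast h2
  have hz3 : 4*(t:ℤ) ≤ (u:ℤ)+1 := by exact_mod_cast h3.1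
  have hz4 : (u:ℤ)+1 ≤ 4*(t:ℤ)+3 := by
    have := h3.2; push_cast; omega
  constructor
  · rcases Nat.eq_zero_or_pos t with h | h
    · simp [h]
    · have ht1 : (1:ℤ) ≤ (t:ℤ) := by exact_mod_cast h
      have hu0 : (0:ℤ) ≤ (u:ℤ) := by positivity
      have m1 : (4*(t:ℤ)-1)*(4*(t:ℤ)-1) ≤ (u:ℤ)*(u:ℤ) :=
        mul_le_mul (by omega) (by omega) (by omega) hu0
      have key : 2*(t:ℤ)*(t:ℤ) ≤ (n:ℤ) + (t:ℤ) := by nlinarith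
      exact_mod_cast key
  · have hu1 : (0:ℤ) ≤ (u:ℤ)+1 := by positivity
    have m2 : ((u:ℤ)+1)*((u:ℤ)+1) ≤ (4*(t:ℤ)+3)*(4*(t:ℤ)+3) :=
      mul_le_mul hz4 hz4 hu1 (by positivity)
    have key : (n:ℤ) + 1 ≤ 2*(t:ℤ)*(t:ℤ) + 3*(t:ℤ) + 1 := by nlinarith
    exact_mod_cast key

lemma tOf_unique {n t : ℕ} (hl : 2*t*t ≤ n + t) (hr : n + 1 ≤ 2*t*t + 3*t + 1) : tOf n = t := by
  obtain ⟨h1, h2⟩ := tOf_spec n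
  set t' := tOf n with ht'
  rcases lt_trichotomy t' t with h | h | h
  · exfalso
    have h3 : t' + 1 ≤ t := h
    nlinarith
  · exact h
  · exfalso
    have h3 : t + 1 ≤ t' := h
    nlinarith

/-- Hamiltonian ray of the upper half plane -/
def U (n : ℕ) : ℤ × ℤ :=
  if ((tOf n : ℤ)) % 2 = 0 then spF (tOf n : ℤ) ((n : ℤ) - (2*(tOf n : ℤ)*(tOf n : ℤ) - (tOf n : ℤ)))
  else spF (tOf n : ℤ) (4*(tOf n : ℤ) - ((n : ℤ) - (2*(tOf n : ℤ)*(tOf n : ℤ) - (tOf n : ℤ))))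

lemma U_o_range (n : ℕ) : 0 ≤ (n : ℤ) - (2*(tOf n : ℤ)*(tOf n : ℤ) - (tOf n : ℤ)) ∧
    (n : ℤ) - (2*(tOf n : ℤ)*(tOf n : ℤ) - (tOf n : ℤ)) ≤ 4*(tOf n : ℤ) := by
  obtain ⟨h1, h2⟩ := tOf_spec n
  have hz1 : 2*(tOf n : ℤ)*(tOf n : ℤ) ≤ (n:ℤ) + (tOf n : ℤ) := by exact_mod_cast h1
  have hz2 : (n:ℤ) + 1 ≤ 2*(tOf n : ℤ)*(tOf n : ℤ) + 3*(tOf n : ℤ) + 1 := by exact_mod_cast h2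
  constructor <;> linarith

lemma U_mem (n : ℕ) : 0 ≤ (U n).2 ∧ (U n).1 ≤ (tOf n : ℤ) ∧ -(tOf n : ℤ) ≤ (U n).1 ∧
    (U n).2 ≤ (tOf n : ℤ) ∧ ((U n).1 = (tOf n : ℤ) ∨ (U n).1 = -(tOf n : ℤ) ∨ (U n).2 = (tOf n : ℤ)) := by
  obtain ⟨ho1, ho2⟩ := U_o_range n
  unfold U
  split_ifs
  · exact spF_mem ho1 ho2
  · exact spF_mem (by omega) (by omega)

lemma U_inj : Function.Injective U := by
  intro n1 n2 h
  have m1 := U_mem n1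
  have m2 := U_mem n2
  have ht : tOf n1 = tOf n2 := by
    rw [h] at m1
    omega
  obtain ⟨ho1, ho2⟩ := U_o_range n1
  obtain ⟨ho1', ho2'⟩ := U_o_range n2
  unfold U at h
  rw [ht] at h ho1 ho2
  split_ifs at h
  · have := spF_inj ho1 ho2 ho1' ho2' h
    omega
  · have := spF_inj (by omega) (by omega) (by omega) (by omega) h
    omega

lemma U_surj {x y : ℤ} (hy : 0 ≤ y) : ∃ n, U n = (x, y) := by
  obtain ⟨T, hT0, hx1, hx2, hy2, hcase⟩ :
      ∃ T : ℤ, 0 ≤ T ∧ x ≤ T ∧ -T ≤ x ∧ y ≤ T ∧ (x = T ∨ x = -T ∨ y = T) := by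
    refine ⟨max |x| y, le_trans hy (le_max_right _ _), ?_, ?_, le_max_right _ _, ?_⟩
    · exact le_trans (le_abs_self x) (le_max_left _ _)
    · have := neg_abs_le x
      have := le_max_left |x| y
      omega
    · rcases max_cases |x| y with ⟨h1, h2⟩ | ⟨h1, h2⟩
      · rcases abs_cases x with ⟨h3, _⟩ | ⟨h3, _⟩
        · left; omega
        · right; left; omega
      · right; right; omega
  obtain ⟨o, ho1, ho2, ho3⟩ := spF_surj (t := T) hy hx1 hx2 hy2 hcase
  set t : ℕ := T.toNat with htn
  have hTt : (t : ℤ) = T := Int.toNat_of_nonneg hT0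
  set o' : ℤ := if T % 2 = 0 then o else 4*T - o with ho'
  have ho'1 : 0 ≤ o' := by rw [ho']; split_ifs <;> omega
  have ho'2 : o' ≤ 4*T := by rw [ho']; split_ifs <;> omega
  have ht2 : t ≤ 2*t*t := by rcases Nat.eq_zero_or_pos t with h|h <;> nlinarith
  refine ⟨(2*t*t - t) + o'.toNat, ?_⟩
  have hton : (o'.toNat : ℤ) = o' := Int.toNat_of_nonneg ho'1
  have ho'2n : o'.toNat ≤ 4*t := by omega
  have htOf : tOf ((2*t*t - t) + o'.toNat) = t := by
    apply tOf_unique <;> omega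
  unfold U
  rw [htOf]
  have hco : ((2*t*t - t + o'.toNat : ℕ) : ℤ) - (2*(t:ℤ)*(t:ℤ) - (t:ℤ)) = o' := by
    have : ((2*t*t - t + o'.toNat : ℕ) : ℤ) = ((2*t*t : ℕ) : ℤ) - (t:ℤ) + o' := by
      push_cast [ht2]
      omega
    rw [this]
    push_cast
    ring
  rw [hco, hTt]
  split_ifs with hsp
  · rw [ho', if_pos (by omega : T % 2 = 0)] 
    exact ho3
  · have hne : ¬ (T % 2 = 0) := by omega
    rw [ho', if_neg hne]
    have e : 4*T - (4*T - o) = o := by ring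
    rw [e]
    exact ho3

lemma U_step (n : ℕ) : adjStep (U n) (U (n+1)) := by
  obtain ⟨h1, h2⟩ := tOf_spec n
  set t := tOf n with ht
  by_cases hend : n + 1 < 2*t*t + 3*t + 1
  · -- stay in same shell
    have htOf : tOf (n+1) = t := tOf_unique (by omega) (by omega)
    obtain ⟨ho1, ho2⟩ := U_o_range n
    rw [← ht] at ho1 ho2
    have hz2 : (n:ℤ)+1 < 2*(t:ℤ)*(t:ℤ)+3*(t:ℤ)+1 := by exact_mod_cast hend
    unfold U
    rw [htOf, ← ht]
    have hco : ((n+1 : ℕ) : ℤ) - (2*(t:ℤ)*(t:ℤ) - (t:ℤ)) =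
        ((n : ℕ) : ℤ) - (2*(t:ℤ)*(t:ℤ) - (t:ℤ)) + 1 := by
      push_cast; ring
    rw [hco]
    set o : ℤ := ((n : ℕ) : ℤ) - (2*(t:ℤ)*(t:ℤ) - (t:ℤ)) with ho
    have hlt : o + 1 ≤ 4*(t:ℤ) := by rw [ho]; omega
    split_ifs
    · exact spF_step (by omega) hlt
    · have e : 4*(t:ℤ) - (o+1) + 1 = 4*(t:ℤ) - o := by ring
      have hstep := spF_step (t := (t:ℤ)) (o := 4*(t:ℤ) - (o+1)) (by omega) (by omega)
      rw [e] at hstep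
      exact adjStep_symm hstep
  · -- move to next shell
    have hn1 : n + 1 = 2*t*t + 3*t + 1 := by omega
    have hr1 : 2*(t+1)*(t+1) = 2*t*t + 4*t + 2 := by ring
    have htOf : tOf (n+1) = t + 1 := by apply tOf_unique <;> omega
    have hz : ((n:ℤ)+1) = 2*(t:ℤ)*(t:ℤ)+3*(t:ℤ)+1 := by exact_mod_cast hn1
    have hoend : ((n : ℕ) : ℤ) - (2*(t:ℤ)*(t:ℤ) - (t:ℤ)) = 4*(t:ℤ) := by linarith
    have hostart : ((n+1 : ℕ) : ℤ) - (2*((t+1:ℕ):ℤ)*((t+1:ℕ):ℤ) - ((t+1:ℕ):ℤ)) = 0 := by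
      push_cast
      push_cast at hz
      linarith
    unfold U
    rw [htOf, ← ht, hoend, hostart]
    have hc : ((t+1 : ℕ) : ℤ) = (t : ℤ) + 1 := by push_cast; ring
    rw [hc]
    have hsp0 : ∀ a : ℤ, 0 ≤ a → spF a 0 = (-a, 0) := by
      intro a ha; unfold spF; rw [if_pos ha]
    have hsp4 : ∀ a : ℤ, 0 ≤ a → spF a (4*a) = (a, 0) := by
      intro a ha; unfold spF
      split_ifs <;> rw [Prod.mk.injEq] <;> constructor <;> omega
    have ht0 : (0:ℤ) ≤ (t:ℤ) := by positivity
    split_ifs with p1 p2 p3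
    · omega
    · have e : 4*((t:ℤ)+1) - 0 = 4*((t:ℤ)+1) := by ring
      rw [e, hsp4 _ ht0, hsp4 _ (by omega)]
      right
      exact ⟨rfl, by dsimp only; omega⟩
    · have e : 4*(t:ℤ) - 4*(t:ℤ) = 0 := by ring
      rw [e, hsp0 _ ht0, hsp0 _ (by omega)]
      right
      exact ⟨rfl, by dsimp only; omega⟩
    · omega

/-- Hamiltonian double ray of the plane -/
def E (n : ℤ) : ℤ × ℤ :=
  if 0 ≤ n then U n.toNat else ((U (-1-n).toNat).1, -1 - (U (-1-n).toNat).2)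

lemma E_inj : Function.Injective E := by
  intro n1 n2 h
  unfold E at h
  split_ifs at h with p1 p2 p3
  · have := U_inj h; omega
  · have m1 := (U_mem n1.toNat).1
    have m2 := (U_mem (-1-n2).toNat).1
    rw [h] at m1
    dsimp only at m1
    omega
  · have m1 := (U_mem (-1-n1).toNat).1
    have m2 := (U_mem n2.toNat).1
    rw [← h] at m2
    dsimp only at m2
    omega
  · rw [Prod.ext_iff] at h
    dsimp only at h
    have h2 : (U (-1-n1).toNat).2 = (U (-1-n2).toNat).2 := by omega
    have h3 : U (-1-n1).toNat = U (-1-n2).toNat := Prod.ext h.1 h2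
    have := U_inj h3
    omega

lemma E_surj : Function.Surjective E := by
  rintro ⟨x, y⟩
  rcases le_or_gt 0 y with hy | hy
  · obtain ⟨n, hn⟩ := U_surj (x := x) hy
    exact ⟨(n : ℤ), by unfold E; rw [if_pos (by positivity)]; simpa using hn⟩
  · obtain ⟨n, hn⟩ := U_surj (x := x) (y := -1 - y) (by omega)
    refine ⟨-1 - (n:ℤ), ?_⟩
    unfold E
    rw [if_neg (by omega)]
    have e : (-1 - (-1 - (n:ℤ))).toNat = n := by omega
    rw [e, hn]
    show (x, -1 - (-1 - y)) = (x, y)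
    rw [show -1 - (-1 - y) = y by ring]

lemma E_step (n : ℤ) : adjStep (E n) (E (n+1)) := by
  rcases lt_trichotomy n (-1) with hn | hn | hn
  · have h0 : ¬ (0 ≤ n) := by omega
    have h0' : ¬ (0 ≤ n + 1) := by omega
    unfold E
    rw [if_neg h0, if_neg h0']
    have hj : (-1 - n).toNat = (-1 - (n+1)).toNat + 1 := by omega
    rw [hj]
    have hstep := U_step ((-1-(n+1)).toNat)
    unfold adjStep at hstep ⊢
    dsimp only at hstep ⊢
    omega
  · subst hn
    have hU0 : U 0 = (0, 0) := by
      have h : tOf 0 = 0 := by unfold tOf; norm_num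
      unfold U
      rw [h]
      norm_num
      unfold spF
      norm_num
    unfold E
    norm_num
    rw [hU0]
    unfold adjStep
    dsimp only
    omega
  · have h0 : (0:ℤ) ≤ n := by omega
    have h0' : (0:ℤ) ≤ n + 1 := by omega
    unfold E
    rw [if_pos h0, if_pos h0']
    have hj : (n + 1).toNat = n.toNat + 1 := by omega
    rw [hj]
    exact U_step n.toNat

section grp
variable {Γ : Type*} [AddCommGroup Γ] [DecidableEq Γ]

lemma stp_mono {S T : Set Γ} (hST : S ⊆ T) {x y : Γ} (h : stp S x y) : stp T x y := by
  rcases h with h | h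
  · exact Or.inl (hST h)
  · exact Or.inr (hST h)

lemma stp_add {S : Set Γ} {x y : Γ} (c : Γ) (h : stp S x y) : stp S (x + c) (y + c) := by
  unfold stp at *
  simpa [add_sub_add_right_eq_sub] using h

lemma stp_right {S : Set Γ} {s : Γ} (hs : s ∈ S) (x : Γ) : stp S x (x + s) := by
  left; simp [hs]

lemma mem_closure_insert' {s : Γ} {A : Set Γ} {x : Γ} :
    x ∈ AddSubgroup.closure (insert s A) ↔
      ∃ k : ℤ, ∃ y ∈ AddSubgroup.closure A, x = y + k • s := by
  rw [← Set.singleton_union, AddSubgroup.closure_union, AddSubgroup.mem_sup]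
  constructor
  · rintro ⟨y, hy, z, hz, rfl⟩
    obtain ⟨k, rfl⟩ := AddSubgroup.mem_closure_singleton.1 hy
    exact ⟨k, z, hz, by abel⟩
  · rintro ⟨k, y, hy, rfl⟩
    exact ⟨k • s, AddSubgroup.mem_closure_singleton.2 ⟨k, rfl⟩, y, hy, by abel⟩

lemma coe_insert_erase {S : Finset Γ} {s : Γ} (hs : s ∈ S) :
    (S : Set Γ) = insert s ((S.erase s : Finset Γ) : Set Γ) := by
  rw [← Finset.coe_insert, Finset.insert_erase hs]

/-- reduction of a multiple of `s` modulo `K` when `m • s ∈ K` -/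
lemma reduce_mod {K : AddSubgroup Γ} {s : Γ} {m : ℕ} (hm : 0 < m)
    (hms : (m : ℤ) • s ∈ K) (k : ℤ) :
    ∃ r : ℕ, r < m ∧ k • s - (r : ℤ) • s ∈ K := by
  have hm' : (0:ℤ) < (m:ℤ) := by exact_mod_cast hm
  refine ⟨(k % m).toNat, ?_, ?_⟩
  · have := Int.emod_lt_of_pos k hm'
    have := Int.emod_nonneg k (by omega : (m:ℤ) ≠ 0)
    omega
  · have hnn : (0:ℤ) ≤ k % m := Int.emod_nonneg k (by omega)
    rw [Int.toNat_of_nonneg hnn]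
    have h : k • s - (k % (m:ℤ)) • s = (k / (m:ℤ)) • ((m:ℤ) • s) := by
      rw [smul_smul, ← sub_smul]
      congr 1
      have h1 := Int.mul_ediv_add_emod k (m:ℤ)
      have h2 : (k/(m:ℤ)) * (m:ℤ) = (m:ℤ) * (k/(m:ℤ)) := mul_comm _ _
      omega
    rw [h]
    exact AddSubgroup.zsmul_mem K hms _

/-- if no smaller positive multiple of `s` is in `K`, distinct small column indices differ -/
lemma col_eq {K : AddSubgroup Γ} {s : Γ} {m₀ : ℕ}
    (hmin : ∀ l : ℕ, 0 < l → l < m₀ → ((l : ℤ) • s ∉ K)) {b1 b2 : ℕ}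
    (h1 : b1 < m₀) (h2 : b2 < m₀) (h : ((b1 : ℤ) - (b2 : ℤ)) • s ∈ K) : b1 = b2 := by
  by_contra hne
  rcases Nat.lt_or_ge b1 b2 with hlt | hge
  · have h' : (((b2 - b1 : ℕ) : ℤ)) • s ∈ K := by
      have : ((b2 - b1 : ℕ) : ℤ) = -(((b1:ℤ) - b2)) := by omega
      rw [this, neg_smul]
      exact AddSubgroup.neg_mem K h
    exact hmin (b2 - b1) (by omega) (by omega) h'
  · have hlt : b2 < b1 := by omega
    have h' : (((b1 - b2 : ℕ) : ℤ)) • s ∈ K := by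
      have : ((b1 - b2 : ℕ) : ℤ) = ((b1:ℤ) - b2) := by omega
      rw [this]
      exact h
    exact hmin (b1 - b2) (by omega) (by omega) h'

lemma col_eq_int {K : AddSubgroup Γ} {s : Γ}
    (hfree : ∀ l : ℕ, 0 < l → ((l : ℤ) • s ∉ K)) {k : ℤ} (h : k • s ∈ K) : k = 0 := by
  by_contra hne
  rcases Int.lt_or_lt_of_ne hne with hlt | hlt
  · refine hfree (-k).toNat (by omega) ?_
    have : (((-k).toNat : ℤ)) = -k := by omega
    rw [this, neg_smul]
    exact AddSubgroup.neg_mem K h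
  · refine hfree k.toNat (by omega) ?_
    have : ((k.toNat : ℤ)) = k := by omega
    rwa [this]
end grp
section fincase
variable {Γ : Type*} [AddCommGroup Γ] [DecidableEq Γ]

lemma finCase : ∀ (N : ℕ) (S : Finset Γ), S.card ≤ N →
    ((AddSubgroup.closure (S : Set Γ) : Set Γ)).Finite →
    ∃ (n : ℕ) (p : ℕ → Γ), 0 < n ∧
      Set.InjOn p (Set.Iio n) ∧
      p '' (Set.Iio n) = (AddSubgroup.closure (S : Set Γ) : Set Γ) ∧
      ∀ j, j + 1 < n → stp (S : Set Γ) (p j) (p (j+1)) := by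
  intro N
  induction N with
  | zero =>
    intro S hcard _
    have hS : S = ∅ := Finset.card_eq_zero.mp (by omega)
    subst hS
    refine ⟨1, fun _ => (0 : Γ), one_pos, ?_, ?_, ?_⟩
    · intro a ha b hb _
      simp only [Set.mem_Iio] at ha hb
      omega
    · simp only [Finset.coe_empty, AddSubgroup.closure_empty]
      ext z
      simp only [Set.mem_image, Set.mem_Iio]
      constructor
      · rintro ⟨a, _, rfl⟩
        simp
      · intro hz
        simp only [AddSubgroup.coe_bot, Set.mem_singleton_iff] at hz
        exact ⟨0, by omega, hz.symm⟩
    · intro j hj; omega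
  | succ N ih =>
    intro S hcard hfin
    classical
    by_cases hS : S = ∅
    · subst hS
      refine ⟨1, fun _ => (0 : Γ), one_pos, ?_, ?_, ?_⟩
      · intro a ha b hb _
        simp only [Set.mem_Iio] at ha hb
        omega
      · simp only [Finset.coe_empty, AddSubgroup.closure_empty]
        ext z
        simp only [Set.mem_image, Set.mem_Iio]
        constructor
        · rintro ⟨a, _, rfl⟩
          simp
        · intro hz
          simp only [AddSubgroup.coe_bot, Set.mem_singleton_iff] at hz
          exact ⟨0, by omega, hz.symm⟩
      · intro j hj; omega
    · obtain ⟨s, hs⟩ := Finset.nonempty_iff_ne_empty.2 hS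
      set S' := S.erase s with hS'
      have hsub : (S' : Set Γ) ⊆ (S : Set Γ) := by
        exact_mod_cast Finset.erase_subset s S
      have hins : (S : Set Γ) = insert s ((S' : Finset Γ) : Set Γ) := coe_insert_erase hs
      have hclsub : AddSubgroup.closure (S' : Set Γ) ≤ AddSubgroup.closure (S : Set Γ) :=
        AddSubgroup.closure_mono hsub
      have hfin' : ((AddSubgroup.closure (S' : Set Γ) : Set Γ)).Finite :=
        hfin.subset hclsub
      obtain ⟨n', p', hn', hinj', himg', hstp'⟩ := ih S'
        (by rw [hS']; have := Finset.card_erase_of_mem hs; omega) hfin'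
      set K := AddSubgroup.closure (S' : Set Γ) with hK
      have hmemp : ∀ r, r < n' → p' r ∈ K := by
        intro r hr
        have : p' r ∈ p' '' (Set.Iio n') := ⟨r, hr, rfl⟩
        rw [himg'] at this
        exact this
      have hsK : s ∈ AddSubgroup.closure (S : Set Γ) :=
        AddSubgroup.subset_closure (by exact_mod_cast hs)
      -- `s` has finite order modulo K (indeed finite order)
      have hex : ∃ m : ℕ, 0 < m ∧ ((m : ℤ) • s ∈ K) := by
        have hmap : ∀ k : ℕ, ((k:ℕ) : ℤ) • s ∈ AddSubgroup.closure (S : Set Γ) :=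
          fun k => AddSubgroup.zsmul_mem _ hsK _
        have hnotinj : ¬ Function.Injective (fun k : ℕ => ((k : ℤ)) • s) := by
          intro hinj
        
          have hrange : Set.range (fun k : ℕ => ((k : ℤ)) • s) ⊆
              (AddSubgroup.closure (S : Set Γ) : Set Γ) := by
            rintro x ⟨k, rfl⟩
            exact hmap k
          exact Set.infinite_range_of_injective hinj (hfin.subset hrange)
        rw [Function.not_injective_iff] at hnotinj
        obtain ⟨a, b, hab, hne⟩ := hnotinj
        rcases Nat.lt_or_ge a b with h | h
        · refine ⟨b - a, by omega, ?_⟩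
          have : ((b - a : ℕ) : ℤ) • s = (b : ℤ) • s - (a : ℤ) • s := by
            rw [← sub_smul]
            congr 1
            omega
          rw [this, hab, sub_self]
          exact zero_mem K
        · refine ⟨a - b, by omega, ?_⟩
          have : ((a - b : ℕ) : ℤ) • s = (a : ℤ) • s - (b : ℤ) • s := by
            rw [← sub_smul]
            congr 1
            omega
          rw [this, hab, sub_self]
          exact zero_mem K
      obtain ⟨m₀, ⟨hm₀pos, hm₀mem⟩, hminfind⟩ :
          ∃ m₀ : ℕ, (0 < m₀ ∧ ((m₀:ℤ) • s ∈ K)) ∧ ∀ l < m₀, ¬(0 < l ∧ ((l:ℤ) • s ∈ K)) :=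
        ⟨Nat.find hex, Nat.find_spec hex, fun l hl => Nat.find_min hex hl⟩
      have hmin : ∀ l : ℕ, 0 < l → l < m₀ → ((l : ℤ) • s ∉ K) :=
        fun l h1 h2 hm => hminfind l h2 ⟨h1, hm⟩
      -- the enumeration
      refine ⟨n' * m₀, fun j => p' (sRow n' j) + ((j / n' : ℕ) : ℤ) • s, by positivity,
        ?_, ?_, ?_⟩
      · -- injectivity
        intro j1 hj1 j2 hj2 heq
        simp only [Set.mem_Iio] at hj1 hj2
        have hb1 : j1 / n' < m₀ := Nat.div_lt_of_lt_mul (by omega)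
        have hb2 : j2 / n' < m₀ := Nat.div_lt_of_lt_mul (by omega)
        have hr1 : sRow n' j1 < n' := sRow_lt hn' j1
        have hr2 : sRow n' j2 < n' := sRow_lt hn' j2
        simp only [] at heq
        have h2 : (((j1 / n' : ℕ) : ℤ) - ((j2 / n' : ℕ) : ℤ)) • s =
            p' (sRow n' j2) - p' (sRow n' j1) := by
          rw [sub_smul, sub_eq_sub_iff_add_eq_add, add_comm]
          exact heq
        have hmem2 : (((j1 / n' : ℕ) : ℤ) - ((j2 / n' : ℕ) : ℤ)) • s ∈ K := by
          rw [h2]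
          exact sub_mem (hmemp _ hr2) (hmemp _ hr1)
        have hbeq : j1 / n' = j2 / n' := col_eq hmin hb1 hb2 hmem2
        have hpeq : p' (sRow n' j1) = p' (sRow n' j2) := by
          rw [hbeq] at heq
          exact add_right_cancel heq
        have hreq : sRow n' j1 = sRow n' j2 := hinj' hr1 hr2 hpeq
        exact sF_inj hn' hbeq hreq
      · -- image
        ext x
        simp only [Set.mem_image, Set.mem_Iio]
        constructor
        · rintro ⟨j, hj, rfl⟩
          exact AddSubgroup.add_mem _ (hclsub (hmemp _ (sRow_lt hn' j)))
            (AddSubgroup.zsmul_mem _ hsK _)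
        · intro hx
          rw [hins] at hx
          have hx' : x ∈ AddSubgroup.closure (insert s ((S' : Finset Γ) : Set Γ)) := hx
          rw [mem_closure_insert'] at hx'
          obtain ⟨k, y, hyK, rfl⟩ := hx'
          obtain ⟨r, hrm, hred⟩ := reduce_mod hm₀pos hm₀mem k
          have hy' : y + (k • s - (r : ℤ) • s) ∈ K := add_mem hyK hred
          have : y + (k • s - (r : ℤ) • s) ∈ p' '' (Set.Iio n') := by
            rw [himg']
            exact hy'
          obtain ⟨i, hi, hpi⟩ := this
          simp only [Set.mem_Iio] at hi
          obtain ⟨j, hjlt, hjd, hjr⟩ := sF_surj hn' hrm hi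
          refine ⟨j, by omega, ?_⟩
          rw [hjr, hjd, hpi]
          abel
      · -- steps
        intro j hj
        dsimp only
        rcases sF_step hn' j with ⟨hd, hr⟩ | ⟨hd, hr⟩
        · rw [hd]
          apply stp_add
          apply stp_mono hsub
          rcases hr with hr | hr
          · rw [hr]
            apply hstp'
            rw [← hr]
            exact sRow_lt hn' (j+1)
          · rw [hr]
            apply stp_symm
            apply hstp'
            rw [← hr]
            exact sRow_lt hn' j
        · rw [hd, hr]
          have hcast : (((j / n' + 1 : ℕ)) : ℤ) • s = ((j / n' : ℕ) : ℤ) • s + s := by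
            push_cast
            rw [add_smul, one_smul]
          rw [hcast, ← add_assoc]
          exact stp_right (by exact_mod_cast hs) _

end fincase
section infcase
variable {Γ : Type*} [AddCommGroup Γ] [DecidableEq Γ]

lemma infCase : ∀ (N : ℕ) (S : Finset Γ), S.card ≤ N →
    ((AddSubgroup.closure (S : Set Γ) : Set Γ)).Infinite →
    ∃ f : ℤ → Γ, Function.Injective f ∧
      Set.range f = (AddSubgroup.closure (S : Set Γ) : Set Γ) ∧
      ∀ i : ℤ, stp (S : Set Γ) (f i) (f (i+1)) := by
  intro N
  induction N with
  | zero =>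
    intro S hcard hinf
    exfalso
    have hSe : S = ∅ := Finset.card_eq_zero.mp (by omega)
    subst hSe
    apply hinf
    simp only [Finset.coe_empty, AddSubgroup.closure_empty, AddSubgroup.coe_bot]
    exact Set.finite_singleton 0
  | succ N ih =>
    intro S hcard hinf
    classical
    by_cases hSe : S = ∅
    · exfalso
      subst hSe
      apply hinf
      simp only [Finset.coe_empty, AddSubgroup.closure_empty, AddSubgroup.coe_bot]
      exact Set.finite_singleton 0
    · obtain ⟨s, hs⟩ := Finset.nonempty_iff_ne_empty.2 hSe
      set S' := S.erase s with hS'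
      have hsub : (S' : Set Γ) ⊆ (S : Set Γ) := by
        exact_mod_cast Finset.erase_subset s S
      have hins : (S : Set Γ) = insert s ((S' : Finset Γ) : Set Γ) := coe_insert_erase hs
      have hclsub : AddSubgroup.closure (S' : Set Γ) ≤ AddSubgroup.closure (S : Set Γ) :=
        AddSubgroup.closure_mono hsub
      set K := AddSubgroup.closure (S' : Set Γ) with hK
      have hcard' : S'.card ≤ N := by
        rw [hS']; have := Finset.card_erase_of_mem hs; omega
      have hsK : s ∈ AddSubgroup.closure (S : Set Γ) :=
        AddSubgroup.subset_closure (by exact_mod_cast hs)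
      by_cases hex : ∃ m : ℕ, 0 < m ∧ ((m : ℤ) • s ∈ K)
      · -- finite "quotient" by K: K must be infinite; snake through m₀ cosets
        obtain ⟨m₀, ⟨hm₀pos, hm₀mem⟩, hminfind⟩ :
            ∃ m₀ : ℕ, (0 < m₀ ∧ ((m₀:ℤ) • s ∈ K)) ∧ ∀ l < m₀, ¬(0 < l ∧ ((l:ℤ) • s ∈ K)) :=
          ⟨Nat.find hex, Nat.find_spec hex, fun l hl => Nat.find_min hex hl⟩
        have hmin : ∀ l : ℕ, 0 < l → l < m₀ → ((l : ℤ) • s ∉ K) :=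
          fun l h1 h2 hm => hminfind l h2 ⟨h1, hm⟩
        have hKinf : (K : Set Γ).Infinite := by
          by_contra hKfin
          rw [Set.not_infinite] at hKfin
          refine hinf ?_
          have hsubU : (AddSubgroup.closure (S : Set Γ) : Set Γ) ⊆
              ⋃ r ∈ Finset.range m₀, (fun y => y + ((r : ℕ) : ℤ) • s) '' (K : Set Γ) := by
            intro x hx
            rw [hins] at hx
            have hx' : x ∈ AddSubgroup.closure (insert s ((S' : Finset Γ) : Set Γ)) := hx
            rw [mem_closure_insert'] at hx'
            obtain ⟨k, y, hyK, rfl⟩ := hx'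
            obtain ⟨r, hrm, hred⟩ := reduce_mod hm₀pos hm₀mem k
            refine Set.mem_iUnion.2 ⟨r, Set.mem_iUnion.2 ⟨Finset.mem_range.2 hrm,
              ⟨y + (k • s - (r : ℤ) • s), add_mem hyK hred, ?_⟩⟩⟩
            dsimp only
            abel
          exact ((Finset.range m₀).finite_toSet.biUnion
            (fun r _ => hKfin.image _)).subset hsubU
        obtain ⟨f', hinj', hrng', hstp'⟩ := ih S' hcard' hKinf
        have hmemf : ∀ i : ℤ, f' i ∈ K := by
          intro i
          have : f' i ∈ Set.range f' := ⟨i, rfl⟩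
          rw [hrng'] at this
          exact this
        refine ⟨fun n => f' ((sZ m₀ n).1) + (((sZ m₀ n).2 : ℕ) : ℤ) • s, ?_, ?_, ?_⟩
        · -- injective
          intro n1 n2 heq
          dsimp only at heq
          have hr1 : (sZ m₀ n1).2 < m₀ := sZ_row_lt hm₀pos n1
          have hr2 : (sZ m₀ n2).2 < m₀ := sZ_row_lt hm₀pos n2
          have h2 : ((((sZ m₀ n1).2 : ℕ) : ℤ) - (((sZ m₀ n2).2 : ℕ) : ℤ)) • s =
              f' ((sZ m₀ n2).1) - f' ((sZ m₀ n1).1) := by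
            rw [sub_smul, sub_eq_sub_iff_add_eq_add, add_comm]
            exact heq
          have hmem2 : ((((sZ m₀ n1).2 : ℕ) : ℤ) - (((sZ m₀ n2).2 : ℕ) : ℤ)) • s ∈ K := by
            rw [h2]
            exact sub_mem (hmemf _) (hmemf _)
          have hreq : (sZ m₀ n1).2 = (sZ m₀ n2).2 := col_eq hmin hr1 hr2 hmem2
          have hfeq : f' ((sZ m₀ n1).1) = f' ((sZ m₀ n2).1) := by
            rw [hreq] at heq
            exact add_right_cancel heq
          have hceq : (sZ m₀ n1).1 = (sZ m₀ n2).1 := hinj' hfeq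
          exact sZ_inj hm₀pos (Prod.ext hceq hreq)
        · -- range
          ext x
          simp only [Set.mem_range]
          constructor
          · rintro ⟨n, rfl⟩
            exact AddSubgroup.add_mem _ (hclsub (hmemf _)) (AddSubgroup.zsmul_mem _ hsK _)
          · intro hx
            rw [hins] at hx
            have hx' : x ∈ AddSubgroup.closure (insert s ((S' : Finset Γ) : Set Γ)) := hx
            rw [mem_closure_insert'] at hx'
            obtain ⟨k, y, hyK, rfl⟩ := hx'
            obtain ⟨r, hrm, hred⟩ := reduce_mod hm₀pos hm₀mem k
            have hy' : y + (k • s - (r : ℤ) • s) ∈ K := add_mem hyK hred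
            have : y + (k • s - (r : ℤ) • s) ∈ Set.range f' := by
              rw [hrng']
              exact hy'
            obtain ⟨c, hc⟩ := this
            obtain ⟨n, hn⟩ := sZ_surj hm₀pos c r hrm
            refine ⟨n, ?_⟩
            rw [hn]
            dsimp only
            rw [hc]
            abel
        · -- steps
          intro n
          dsimp only
          rcases sZ_step hm₀pos n with ⟨hceq, hrow⟩ | ⟨hroweq, hcol⟩
          · rw [hceq]
            rcases hrow with hrow | hrow
            · -- row n = row (n+1) + 1 : step down by s
              have hc : (((sZ m₀ n).2 : ℕ) : ℤ) • s = (((sZ m₀ (n+1)).2 : ℕ) : ℤ) • s + s := by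
                have : (((sZ m₀ n).2 : ℕ) : ℤ) = (((sZ m₀ (n+1)).2 : ℕ) : ℤ) + 1 := by
                  exact_mod_cast hrow
                rw [this, add_smul, one_smul]
              rw [hc, ← add_assoc]
              exact stp_symm (stp_right (by exact_mod_cast hs) _)
            · have hc : (((sZ m₀ (n+1)).2 : ℕ) : ℤ) • s = (((sZ m₀ n).2 : ℕ) : ℤ) • s + s := by
                have : (((sZ m₀ (n+1)).2 : ℕ) : ℤ) = (((sZ m₀ n).2 : ℕ) : ℤ) + 1 := by
                  exact_mod_cast hrow
                rw [this, add_smul, one_smul]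
              rw [hc, ← add_assoc]
              exact stp_right (by exact_mod_cast hs) _
          · rw [hroweq]
            apply stp_add
            apply stp_mono hsub
            rcases hcol with hcol | hcol
            · rw [hcol]
              exact stp_symm (hstp' _)
            · rw [hcol]
              exact hstp' _
      · -- no positive multiple of s lies in K
        push_neg at hex
        have hfree : ∀ l : ℕ, 0 < l → ((l : ℤ) • s ∉ K) := fun l hl => hex l hl
        rcases Set.finite_or_infinite (K : Set Γ) with hKfin | hKinf
        · -- K finite: path × ℤ snake
          obtain ⟨n', p', hn', hinj', himg', hstp'⟩ := finCase N S' hcard' hKfin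
          have hmemp : ∀ r, r < n' → p' r ∈ K := by
            intro r hr
            have : p' r ∈ p' '' (Set.Iio n') := ⟨r, hr, rfl⟩
            rw [himg'] at this
            exact this
          refine ⟨fun n => p' ((sZ n' n).2) + ((sZ n' n).1) • s, ?_, ?_, ?_⟩
          · intro n1 n2 heq
            dsimp only at heq
            have hr1 : (sZ n' n1).2 < n' := sZ_row_lt hn' n1
            have hr2 : (sZ n' n2).2 < n' := sZ_row_lt hn' n2
            have h2 : ((sZ n' n1).1 - (sZ n' n2).1) • s =
                p' ((sZ n' n2).2) - p' ((sZ n' n1).2) := by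
              rw [sub_smul, sub_eq_sub_iff_add_eq_add, add_comm]
              exact heq
            have hmem2 : ((sZ n' n1).1 - (sZ n' n2).1) • s ∈ K := by
              rw [h2]
              exact sub_mem (hmemp _ hr2) (hmemp _ hr1)
            have hceq : (sZ n' n1).1 = (sZ n' n2).1 := by
              have := col_eq_int hfree hmem2
              omega
            have hpeq : p' ((sZ n' n1).2) = p' ((sZ n' n2).2) := by
              rw [hceq] at heq
              exact add_right_cancel heq
            have hreq : (sZ n' n1).2 = (sZ n' n2).2 := hinj' hr1 hr2 hpeq
            exact sZ_inj hn' (Prod.ext hceq hreq)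
          · ext x
            simp only [Set.mem_range]
            constructor
            · rintro ⟨n, rfl⟩
              exact AddSubgroup.add_mem _ (hclsub (hmemp _ (sZ_row_lt hn' n)))
                (AddSubgroup.zsmul_mem _ hsK _)
            · intro hx
              rw [hins] at hx
              have hx' : x ∈ AddSubgroup.closure (insert s ((S' : Finset Γ) : Set Γ)) := hx
              rw [mem_closure_insert'] at hx'
              obtain ⟨k, y, hyK, rfl⟩ := hx'
              have : y ∈ p' '' (Set.Iio n') := by
                rw [himg']
                exact hyK
              obtain ⟨i, hi, hpi⟩ := this
              simp only [Set.mem_Iio] at hi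
              obtain ⟨n, hn⟩ := sZ_surj hn' k i hi
              refine ⟨n, ?_⟩
              rw [hn]
              dsimp only
              rw [hpi]
          · intro n
            dsimp only
            rcases sZ_step hn' n with ⟨hceq, hrow⟩ | ⟨hroweq, hcol⟩
            · rw [hceq]
              apply stp_add
              apply stp_mono hsub
              rcases hrow with hrow | hrow
              · rw [hrow]
                apply stp_symm
                apply hstp'
                rw [← hrow]
                exact sZ_row_lt hn' n
              · rw [hrow]
                apply hstp'
                rw [← hrow]
                exact sZ_row_lt hn' (n+1)
            · rw [hroweq]
              rcases hcol with hcol | hcol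
              · have hc : ((sZ n' n).1) • s = ((sZ n' (n+1)).1) • s + s := by
                  rw [hcol, add_smul, one_smul]
                rw [hc, ← add_assoc]
                exact stp_symm (stp_right (by exact_mod_cast hs) _)
              · have hc : ((sZ n' (n+1)).1) • s = ((sZ n' n).1) • s + s := by
                  rw [hcol, add_smul, one_smul]
                rw [hc, ← add_assoc]
                exact stp_right (by exact_mod_cast hs) _
        · -- K infinite and s of infinite order mod K : full plane spiral
          obtain ⟨f', hinj', hrng', hstp'⟩ := ih S' hcard' hKinf
          have hmemf : ∀ i : ℤ, f' i ∈ K := by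
            intro i
            have : f' i ∈ Set.range f' := ⟨i, rfl⟩
            rw [hrng'] at this
            exact this
          refine ⟨fun n => f' ((E n).1) + ((E n).2) • s, ?_, ?_, ?_⟩
          · intro n1 n2 heq
            dsimp only at heq
            have h2 : ((E n1).2 - (E n2).2) • s = f' ((E n2).1) - f' ((E n1).1) := by
              rw [sub_smul, sub_eq_sub_iff_add_eq_add, add_comm]
              exact heq
            have hmem2 : ((E n1).2 - (E n2).2) • s ∈ K := by
              rw [h2]
              exact sub_mem (hmemf _) (hmemf _)
            have hyeq : (E n1).2 = (E n2).2 := by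
              have := col_eq_int hfree hmem2
              omega
            have hfeq : f' ((E n1).1) = f' ((E n2).1) := by
              rw [hyeq] at heq
              exact add_right_cancel heq
            have hxeq : (E n1).1 = (E n2).1 := hinj' hfeq
            exact E_inj (Prod.ext hxeq hyeq)
          · ext x
            simp only [Set.mem_range]
            constructor
            · rintro ⟨n, rfl⟩
              exact AddSubgroup.add_mem _ (hclsub (hmemf _)) (AddSubgroup.zsmul_mem _ hsK _)
            · intro hx
              rw [hins] at hx
              have hx' : x ∈ AddSubgroup.closure (insert s ((S' : Finset Γ) : Set Γ)) := hx
              rw [mem_closure_insert'] at hx'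
              obtain ⟨k, y, hyK, rfl⟩ := hx'
              have : y ∈ Set.range f' := by
                rw [hrng']
                exact hyK
              obtain ⟨c, hc⟩ := this
              obtain ⟨n, hn⟩ := E_surj (c, k)
              refine ⟨n, ?_⟩
              rw [hn]
              dsimp only
              rw [hc]
          · intro n
            dsimp only
            rcases E_step n with ⟨hxeq, hy⟩ | ⟨hyeq, hx⟩
            · rw [hxeq]
              rcases hy with hy | hy
              · have hc : ((E n).2) • s = ((E (n+1)).2) • s + s := by
                  rw [hy, add_smul, one_smul]
                rw [hc, ← add_assoc]
                exact stp_symm (stp_right (by exact_mod_cast hs) _)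
              · have hc : ((E (n+1)).2) • s = ((E n).2) • s + s := by
                  rw [hy, add_smul, one_smul]
                rw [hc, ← add_assoc]
                exact stp_right (by exact_mod_cast hs) _
            · rw [hyeq]
              apply stp_add
              apply stp_mono hsub
              rcases hx with hx | hx
              · rw [hx]
                exact stp_symm (hstp' _)
              · rw [hx]
                exact hstp' _

end infcase
theorem stmt_18 :
    (∀ (Γ : Type) [AddCommGroup Γ] [Countable Γ] [Infinite Γ] (S : Finset Γ),
      AddSubgroup.closure (S : Set Γ) = ⊤ →
        ∃ H : SimpleGraph Γ, H ≤ cayley Γ (S : Set Γ) ∧ IsHamDoubleRay H) ∧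
    IsHamDoubleRay (cayley ℤ ({1} : Set ℤ)) := by
  constructor
  · intro Γ _ _ _ S hgen
    classical
    have hinf : ((AddSubgroup.closure (S : Set Γ) : Set Γ)).Infinite := by
      rw [hgen, AddSubgroup.coe_top]
      exact Set.infinite_univ
    obtain ⟨f, hinj, hrng, hstp⟩ := infCase S.card S le_rfl hinf
    have hsurj : Function.Surjective f := by
      intro x
      have hx : x ∈ Set.range f := by
        rw [hrng, hgen, AddSubgroup.coe_top]
        trivial
      exact hx
    obtain ⟨hle, hham⟩ := rayGraph_isHam hinj hsurj hstp
    exact ⟨rayGraph f, hle, hham⟩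
  · exact int_case
end
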